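/- Let λ be a partition. The only partition μ satisfying K_{λμ} = 1 is μ = λ if and only if λ_i - λ_{i+1} ≤ 1 for all i (where λ_i = 0 for i > ℓ(λ)). -/

import Mathlib

/-- A partition encoded as a weakly decreasing, finitely supported function `ℕ → ℕ`
(0-indexed: `l 0` is the first part). -/
def IsPartition (l : ℕ → ℕ) : Prop :=
  Antitone l ∧ ∃ N, ∀ i, N ≤ i → l i = 0

/-- The size (sum of the parts). -/
noncomputable def psize (l : ℕ → ℕ) : ℕ := ∑ᶠ i, l i

/-- Dominance order: every partial sum of `l` is at least that of `m`. -/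
def Dominates (l m : ℕ → ℕ) : Prop :=
  ∀ k, ∑ i ∈ Finset.range k, m i ≤ ∑ i ∈ Finset.range k, l i

/-- `l` has exactly `h` (nonzero) parts. -/
def PartLength (l : ℕ → ℕ) (h : ℕ) : Prop :=
  (∀ i, i < h → 0 < l i) ∧ ∀ i, h ≤ i → l i = 0

/-- A semistandard Young tableau of shape `l`: positive entries in the cells
`(i, j)` with `j < l i`, zero outside, rows weakly increasing, columns strictly
increasing. -/
def IsSSYT (l : ℕ → ℕ) (T : ℕ → ℕ → ℕ) : Prop :=
  (∀ i j, j < l i → 1 ≤ T i j) ∧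
  (∀ i j, l i ≤ j → T i j = 0) ∧
  (∀ i j k, j ≤ k → k < l i → T i j ≤ T i k) ∧
  (∀ i i' j, i < i' → j < l i' → T i j < T i' j)

/-- The number of cells of `T` (inside shape `l`) with entry `m + 1`. -/
noncomputable def entryCount (l : ℕ → ℕ) (T : ℕ → ℕ → ℕ) (m : ℕ) : ℕ :=
  Set.ncard {p : ℕ × ℕ | p.2 < l p.1 ∧ T p.1 p.2 = m + 1}

/-- `T` has weight `w`: the entry `m + 1` occurs `w m` times. -/
def HasWeight (l : ℕ → ℕ) (T : ℕ → ℕ → ℕ) (w : ℕ → ℕ) : Prop :=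
  ∀ m, entryCount l T m = w m

/-- The Kostka number: the number of semistandard Young tableaux of shape `l`
and weight `w`. -/
noncomputable def kostka (l w : ℕ → ℕ) : ℕ :=
  Set.ncard {T : ℕ → ℕ → ℕ | IsSSYT l T ∧ HasWeight l T w}


set_option linter.unusedSectionVars false
set_option linter.unusedVariables false

namespace KostkaAux


/-- The entry set: cells of the diagram with entry `m+1`. -/
def ES (l : ℕ → ℕ) (T : ℕ → ℕ → ℕ) (m : ℕ) : Set (ℕ × ℕ) :=
  {p : ℕ × ℕ | p.2 < l p.1 ∧ T p.1 p.2 = m + 1}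

lemma entryCount_eq (l : ℕ → ℕ) (T : ℕ → ℕ → ℕ) (m : ℕ) :
    entryCount l T m = (ES l T m).ncard := rfl

lemma diagram_finite' {lam : ℕ → ℕ} (hlp : IsPartition lam) :
    {p : ℕ × ℕ | p.2 < lam p.1}.Finite := by
  obtain ⟨N, hN⟩ := hlp.2
  apply Set.Finite.subset ((Finset.range N ×ˢ Finset.range (lam 0)).finite_toSet)
  rintro ⟨a, b⟩ hab
  simp only [Set.mem_setOf_eq] at hab
  simp only [Finset.coe_product, Set.mem_prod, Finset.mem_coe, Finset.mem_range]
  constructor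
  · by_contra hc
    rw [hN a (by omega)] at hab; omega
  · exact lt_of_lt_of_le hab (hlp.1 (Nat.zero_le a))

lemma ES_finite {lam : ℕ → ℕ} (hlp : IsPartition lam) (T : ℕ → ℕ → ℕ) (m : ℕ) :
    (ES lam T m).Finite :=
  Set.Finite.subset (diagram_finite' hlp) (fun p hp => hp.1)

/-- Entries in row `i` are at least `i+1`. -/
lemma row_lb {lam : ℕ → ℕ} {T : ℕ → ℕ → ℕ} (hlp : IsPartition lam) (hT : IsSSYT lam T) :
    ∀ i j, j < lam i → i + 1 ≤ T i j := by
  intro i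
  induction i with
  | zero => exact fun j hj => hT.1 0 j hj
  | succ i ih =>
    intro j hj
    have hji : j < lam i := lt_of_lt_of_le hj (hlp.1 (Nat.le_succ i))
    have h1 := ih j hji
    have h2 := hT.2.2.2 i (i + 1) j (Nat.lt_succ_self i) hj
    omega

lemma mk_injective (m : ℕ) : Function.Injective (Prod.mk m : ℕ → ℕ × ℕ) := by
  intro a b h
  exact (Prod.mk.injEq _ _ _ _).mp h |>.2

lemma ncard_row (m n : ℕ) : ((Prod.mk m : ℕ → ℕ × ℕ) '' Set.Iio n).ncard = n := by
  rw [Set.ncard_image_of_injective _ (mk_injective m), ← Finset.coe_range,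
    Set.ncard_coe_finset, Finset.card_range]

lemma row_finite (m n : ℕ) : ((Prod.mk m : ℕ → ℕ × ℕ) '' Set.Iio n).Finite := by
  apply Set.Finite.image
  rw [← Finset.coe_range]
  exact (Finset.range n).finite_toSet

/-- Helper: if all cells in rows `< k` have entries `< k+1` and the count of entry `k+1`
is `lam k`, then row `k` is filled with `k+1`. -/
lemma row_full {lam : ℕ → ℕ} {T : ℕ → ℕ → ℕ} (hlp : IsPartition lam) (hT : IsSSYT lam T)
    {k : ℕ} (hcount : entryCount lam T k = lam k)
    (hprev : ∀ p, p < k → ∀ c, c < lam p → T p c < k + 1) :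
    ∀ j, j < lam k → T k j = k + 1 := by
  have hsub : ES lam T k ⊆ (Prod.mk k : ℕ → ℕ × ℕ) '' Set.Iio (lam k) := by
    rintro ⟨p, c⟩ ⟨hc, hv⟩
    dsimp only at hc hv
    have hp1 : p + 1 ≤ T p c := row_lb hlp hT p c hc
    have hpk : p ≤ k := by omega
    rcases Nat.lt_or_ge p k with h | h
    · exact absurd hv (by have := hprev p h c hc; omega)
    · have : p = k := by omega
      subst this
      exact ⟨c, hc, rfl⟩
  have hcard : ((Prod.mk k : ℕ → ℕ × ℕ) '' Set.Iio (lam k)).ncard ≤ (ES lam T k).ncard := by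
    rw [ncard_row, ← entryCount_eq, hcount]
  have heq := Set.eq_of_subset_of_ncard_le hsub hcard (row_finite _ _)
  intro j hj
  have : (k, j) ∈ ES lam T k := by
    rw [heq]; exact ⟨j, hj, rfl⟩
  exact this.2


lemma swap_lemma {lam : ℕ → ℕ} {T : ℕ → ℕ → ℕ} (hlp : IsPartition lam) (hT : IsSSYT lam T)
    (p c i j w : ℕ)
    (hx_in : c < lam p) (hy_in : j < lam i)
    (hxv : T p c = w) (hyv : T i j = w + 1)
    (hx_last : c + 1 < lam p → w < T p (c + 1))
    (hx_below : c < lam (p + 1) → T (p + 1) c ≠ w + 1)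
    (hy_first : 0 < j → T i (j - 1) < w + 1)
    (hy_above : 0 < i → T (i - 1) j ≠ w)
    (hne_adj : ¬(p = i ∧ j = c + 1)) :
    ∃ T', IsSSYT lam T' ∧ (∀ m, entryCount lam T' m = entryCount lam T m) ∧ T' ≠ T := by
  have hw1 : 1 ≤ w := by have := hT.1 p c hx_in; omega
  -- distinct rows
  have hpi : p ≠ i := by
    intro h; subst h
    rcases Nat.lt_trichotomy j c with hlt | heq | hgt
    · have := hT.2.2.1 p j c (le_of_lt hlt) hx_in; omega
    · subst heq; omega
    · have hj1 : j = c + 1 ∨ c + 2 ≤ j := by omega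
      rcases hj1 with hj1 | hj1
      · exact hne_adj ⟨rfl, hj1⟩
      · have h1 : c + 1 < lam p := by omega
        have h2 := hx_last h1
        have h3 : T p (c + 1) ≤ T p (j - 1) := hT.2.2.1 p (c + 1) (j - 1) (by omega) (by omega)
        have h4 := hy_first (by omega)
        omega
  -- distinct columns
  have hcj : c ≠ j := by
    intro h; subst h
    rcases Nat.lt_trichotomy p i with hlt | heq | hgt
    · have hc1 : c < lam (p + 1) := lt_of_lt_of_le hy_in (hlp.1 (by omega))
      have h5 : w < T (p + 1) c := by
        have := hT.2.2.2 p (p + 1) c (Nat.lt_succ_self p) hc1; omega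
      have h6 := hx_below hc1
      rcases Nat.lt_or_ge (p + 1) i with hl | hg
      · have := hT.2.2.2 (p + 1) i c hl hy_in; omega
      · have : p + 1 = i := by omega
        rw [this] at h5 h6; omega
    · exact hpi heq
    · have := hT.2.2.2 i p c hgt hx_in; omega
  have key1 : ∀ a', p < a' → c < lam a' → w + 2 ≤ T a' c := by
    intro a' h1 h2
    have hc1 : c < lam (p + 1) := lt_of_lt_of_le h2 (hlp.1 (by omega))
    have h3 : w < T (p + 1) c := by
      have := hT.2.2.2 p (p + 1) c (Nat.lt_succ_self p) hc1; omega
    have h4 := hx_below hc1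
    rcases Nat.lt_or_ge (p + 1) a' with hl | hg
    · have := hT.2.2.2 (p + 1) a' c hl h2; omega
    · have : p + 1 = a' := by omega
      rw [this] at h3 h4; omega
  have key2 : ∀ a, a < i → T a j < w := by
    intro a ha
    have hup : T (i - 1) j < w + 1 := by
      have := hT.2.2.2 (i - 1) i j (by omega) hy_in; omega
    have hne := hy_above (by omega)
    have hup2 : T (i - 1) j < w := by omega
    rcases Nat.lt_or_ge a (i - 1) with hl | hg
    · have hj1 : j < lam (i - 1) := lt_of_lt_of_le hy_in (hlp.1 (by omega))
      have := hT.2.2.2 a (i - 1) j hl hj1; omega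
    · have : a = i - 1 := by omega
      rw [this]; exact hup2
  set T' : ℕ → ℕ → ℕ :=
    fun a b => if a = p ∧ b = c then w + 1 else if a = i ∧ b = j then w else T a b with hT'
  have hv2 : T' p c = w + 1 := by simp [hT']
  have hv3 : T' i j = w := by
    have : ¬(i = p ∧ j = c) := by rintro ⟨h5, h6⟩; omega
    simp only [hT']
    rw [if_neg this]
    simp
  have hv1 : ∀ a b, ¬(a = p ∧ b = c) → ¬(a = i ∧ b = j) → T' a b = T a b := by
    intro a b h1 h2
    simp only [hT']
    rw [if_neg h1, if_neg h2]
  refine ⟨T', ⟨?_, ?_, ?_, ?_⟩, ?_, ?_⟩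
  · -- positivity
    intro a b hb
    by_cases h1 : a = p ∧ b = c
    · obtain ⟨rfl, rfl⟩ := h1; rw [hv2]; omega
    · by_cases h2 : a = i ∧ b = j
      · obtain ⟨rfl, rfl⟩ := h2; rw [hv3]; omega
      · rw [hv1 a b h1 h2]; exact hT.1 a b hb
  · -- zero outside
    intro a b hb
    by_cases h1 : a = p ∧ b = c
    · obtain ⟨rfl, rfl⟩ := h1; omega
    · by_cases h2 : a = i ∧ b = j
      · obtain ⟨rfl, rfl⟩ := h2; omega
      · rw [hv1 a b h1 h2]; exact hT.2.1 a b hb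
  · -- rows weakly increasing
    intro a b k hbk hk
    by_cases hap : a = p
    · subst hap
      -- row a = p; special column c
      by_cases hbc : b = c
      · subst hbc
        by_cases hkc : k = b
        · subst hkc; omega
        · have hbk2 : b + 1 ≤ k := by omega
          rw [hv2, hv1 a k (by omega) (by rintro ⟨h5, h6⟩; omega)]
          have h1 : w < T a (b + 1) := hx_last (by omega)
          have h2 : T a (b + 1) ≤ T a k := hT.2.2.1 a (b + 1) k hbk2 hk
          omega
      · by_cases hkc : k = c
        · subst hkc
          rw [hv2, hv1 a b (by tauto) (by rintro ⟨h5, h6⟩; omega)]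
          have := hT.2.2.1 a b k hbk hk
          omega
        · rw [hv1 a b (by tauto) (by rintro ⟨h5, h6⟩; omega),
            hv1 a k (by tauto) (by rintro ⟨h5, h6⟩; omega)]
          exact hT.2.2.1 a b k hbk hk
    · by_cases hai : a = i
      · subst hai
        by_cases hbj : b = j
        · subst hbj
          by_cases hkj : k = b
          · subst hkj; omega
          · rw [hv3, hv1 a k (by rintro ⟨h5, h6⟩; omega) (by omega)]
            have := hT.2.2.1 a b k hbk hk
            omega
        · by_cases hkj : k = j
          · subst hkj
            rw [hv3, hv1 a b (by rintro ⟨h5, h6⟩; omega) (by tauto)]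
            have hj0 : 0 < k := by omega
            have h1 := hy_first hj0
            have h2 : T a b ≤ T a (k - 1) := hT.2.2.1 a b (k - 1) (by omega) (by omega)
            omega
          · rw [hv1 a b (by rintro ⟨h5, h6⟩; omega) (by tauto),
              hv1 a k (by rintro ⟨h5, h6⟩; omega) (by tauto)]
            exact hT.2.2.1 a b k hbk hk
      · rw [hv1 a b (by tauto) (by tauto), hv1 a k (by tauto) (by tauto)]
        exact hT.2.2.1 a b k hbk hk
  · -- columns strictly increasing
    intro a a' b haa' hb
    have hba : b < lam a := lt_of_lt_of_le hb (hlp.1 (le_of_lt haa'))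
    by_cases h1 : a = p ∧ b = c
    · obtain ⟨rfl, rfl⟩ := h1
      rw [hv2, hv1 a' b (by omega) (by rintro ⟨h5, h6⟩; omega)]
      have := key1 a' haa' hb
      omega
    · by_cases h2 : a = i ∧ b = j
      · obtain ⟨rfl, rfl⟩ := h2
        rw [hv3, hv1 a' b (by rintro ⟨h5, h6⟩; omega) (by omega)]
        have := hT.2.2.2 a a' b haa' hb
        omega
      · rw [hv1 a b h1 h2]
        by_cases h3 : a' = p ∧ b = c
        · obtain ⟨rfl, rfl⟩ := h3
          rw [hv2]
          have := hT.2.2.2 a a' b haa' hb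
          omega
        · by_cases h4 : a' = i ∧ b = j
          · obtain ⟨rfl, rfl⟩ := h4
            rw [hv3]
            exact key2 a haa'
          · rw [hv1 a' b h3 h4]
            exact hT.2.2.2 a a' b haa' hb
  · -- weight preserved
    intro m
    rw [entryCount_eq, entryCount_eq]
    rcases Nat.lt_trichotomy (m + 1) w with hm | hm | hm
    · -- m+1 < w : sets are equal
      have : ES lam T' m = ES lam T m := by
        ext ⟨a, b⟩
        simp only [ES, Set.mem_setOf_eq]
        by_cases h1 : a = p ∧ b = c
        · obtain ⟨rfl, rfl⟩ := h1; rw [hv2]; omega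
        · by_cases h2 : a = i ∧ b = j
          · obtain ⟨rfl, rfl⟩ := h2; rw [hv3]; omega
          · rw [hv1 a b h1 h2]
      rw [this]
    · -- m+1 = w : ES T' m = insert (i,j) (ES T m \ {(p,c)})
      have hset : ES lam T' m = insert (i, j) (ES lam T m \ {(p, c)}) := by
        ext ⟨a, b⟩
        simp only [ES, Set.mem_setOf_eq, Set.mem_insert_iff, Set.mem_diff,
          Set.mem_singleton_iff, Prod.mk.injEq]
        by_cases h1 : a = p ∧ b = c
        · obtain ⟨rfl, rfl⟩ := h1
          rw [hv2]
          constructor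
          · intro h; omega
          · rintro (⟨h5, h6⟩ | ⟨_, h5⟩)
            · omega
            · exact absurd ⟨rfl, rfl⟩ h5
        · by_cases h2 : a = i ∧ b = j
          · obtain ⟨rfl, rfl⟩ := h2
            rw [hv3]
            constructor
            · intro _; left; exact ⟨rfl, rfl⟩
            · intro _; exact ⟨hy_in, by omega⟩
          · rw [hv1 a b h1 h2]
            constructor
            · intro h; right; exact ⟨h, by tauto⟩
            · rintro (⟨h5, h6⟩ | ⟨h5, _⟩)
              · exact absurd ⟨h5, h6⟩ h2
              · exact h5
      rw [hset]
      have hyin' : (i, j) ∉ ES lam T m \ {(p, c)} := by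
        intro h
        have := h.1.2
        simp only at this
        omega
      have hxin' : (p, c) ∈ ES lam T m := ⟨hx_in, by simpa using by omega⟩
      rw [Set.ncard_insert_of_notMem hyin'
        ((ES_finite hlp T m).diff)]
      rw [Set.ncard_diff_singleton_add_one hxin' (ES_finite hlp T m)]
    · rcases Nat.lt_or_ge (m + 1) (w + 2) with hm2 | hm2
      · -- m+1 = w+1
        have hmw : m + 1 = w + 1 := by omega
        have hset : ES lam T' m = insert (p, c) (ES lam T m \ {(i, j)}) := by
          ext ⟨a, b⟩
          simp only [ES, Set.mem_setOf_eq, Set.mem_insert_iff, Set.mem_diff,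
            Set.mem_singleton_iff, Prod.mk.injEq]
          by_cases h1 : a = p ∧ b = c
          · obtain ⟨rfl, rfl⟩ := h1
            rw [hv2]
            constructor
            · intro _; left; exact ⟨rfl, rfl⟩
            · intro _; exact ⟨hx_in, by omega⟩
          · by_cases h2 : a = i ∧ b = j
            · obtain ⟨rfl, rfl⟩ := h2
              rw [hv3]
              constructor
              · intro h; omega
              · rintro (⟨h5, h6⟩ | ⟨_, h5⟩)
                · omega
                · exact absurd ⟨rfl, rfl⟩ h5
            · rw [hv1 a b h1 h2]
              constructor
              · intro h; right; exact ⟨h, by tauto⟩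
              · rintro (⟨h5, h6⟩ | ⟨h5, _⟩)
                · exact absurd ⟨h5, h6⟩ h1
                · exact h5
        rw [hset]
        have hxin' : (p, c) ∉ ES lam T m \ {(i, j)} := by
          intro h
          have := h.1.2
          simp only at this
          omega
        have hyin' : (i, j) ∈ ES lam T m := ⟨hy_in, by simpa using by omega⟩
        rw [Set.ncard_insert_of_notMem hxin'
          ((ES_finite hlp T m).diff)]
        rw [Set.ncard_diff_singleton_add_one hyin' (ES_finite hlp T m)]
      · -- m+1 > w+1 : equal sets
        have : ES lam T' m = ES lam T m := by
          ext ⟨a, b⟩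
          simp only [ES, Set.mem_setOf_eq]
          by_cases h1 : a = p ∧ b = c
          · obtain ⟨rfl, rfl⟩ := h1; rw [hv2]; omega
          · by_cases h2 : a = i ∧ b = j
            · obtain ⟨rfl, rfl⟩ := h2; rw [hv3]; omega
            · rw [hv1 a b h1 h2]
        rw [this]
  · -- T' ≠ T
    intro h
    have := congrFun (congrFun h p) c
    rw [hv2, hxv] at this
    omega

/-- Core rigidity lemma: a non-superstandard SSYT on a gap-≤1 shape with weakly
decreasing weight admits a modification. -/
lemma exists_other {lam : ℕ → ℕ} {T : ℕ → ℕ → ℕ} (hlp : IsPartition lam)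
    (hgap : ∀ i, lam i - lam (i + 1) ≤ 1)
    (hT : IsSSYT lam T)
    (hmono : ∀ m, entryCount lam T (m + 1) ≤ entryCount lam T m)
    (a b : ℕ) (hab : b < lam a) (h2ab : 2 ≤ T a b)
    (hbad0 : a = 0 ∨ T (a - 1) b ≠ T a b - 1) :
    ∃ T', IsSSYT lam T' ∧ (∀ m, entryCount lam T' m = entryCount lam T m) ∧ T' ≠ T := by
  classical
  set Bad : Set (ℕ × ℕ) :=
    {z | z.2 < lam z.1 ∧ 2 ≤ T z.1 z.2 ∧ (z.1 = 0 ∨ T (z.1 - 1) z.2 ≠ T z.1 z.2 - 1)} with hBad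
  have hBfin : Bad.Finite := (diagram_finite' hlp).subset (fun z hz => hz.1)
  have hBne : Bad.Nonempty := ⟨(a, b), hab, h2ab, hbad0⟩
  obtain ⟨⟨a0, b0⟩, hz, hzmax⟩ := Set.exists_max_image Bad (fun z => T z.1 z.2) hBfin hBne
  obtain ⟨hb0, hu2, hbadz⟩ := hz
  simp only at hb0 hu2 hbadz
  set u := T a0 b0 with hu
  clear_value u
  -- block start
  have hPb0 : b0 ≤ b0 ∧ ∀ e, b0 ≤ e → e ≤ b0 → T a0 e = u := by
    refine ⟨le_refl _, fun e he1 he2 => ?_⟩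
    have : e = b0 := by omega
    rw [this, ← hu]
  have hex : ∃ d, d ≤ b0 ∧ ∀ e, d ≤ e → e ≤ b0 → T a0 e = u := ⟨b0, hPb0⟩
  set j0 := Nat.find hex with hj0def
  have hj0 := Nat.find_spec hex
  have hj0min : ∀ d, d < j0 → ¬(d ≤ b0 ∧ ∀ e, d ≤ e → e ≤ b0 → T a0 e = u) :=
    fun d hd => Nat.find_min hex hd
  have hj0b : j0 ≤ b0 := hj0.1
  have hj0in : j0 < lam a0 := by omega
  have hyval : T a0 j0 = u := hj0.2 j0 (le_refl _) hj0b
  have hleft : 0 < j0 → T a0 (j0 - 1) ≠ u := by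
    intro h0 heq
    apply hj0min (j0 - 1) (by omega)
    refine ⟨by omega, fun e he1 he2 => ?_⟩
    rcases Nat.eq_or_lt_of_le he1 with he | he
    · rw [← he]; exact heq
    · exact hj0.2 e (by omega) he2
  have hy0above : 0 < a0 → T (a0 - 1) j0 ≠ u - 1 := by
    intro h0 heq
    have hbz : T (a0 - 1) b0 ≠ u - 1 := by
      rcases hbadz with h | h
      · omega
      · exact h
    have hb0' : b0 < lam (a0 - 1) := lt_of_lt_of_le hb0 (hlp.1 (by omega))
    have hrow : T (a0 - 1) j0 ≤ T (a0 - 1) b0 := hT.2.2.1 (a0 - 1) j0 b0 hj0b hb0'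
    have hcol : T (a0 - 1) b0 < u := by
      have := hT.2.2.2 (a0 - 1) a0 b0 (by omega) hb0
      omega
    omega
  have hu1 : u - 1 + 1 = u := by omega
  by_cases hX : ∃ x : ℕ × ℕ, x.2 < lam x.1 ∧ T x.1 x.2 = u - 1 ∧
      (x.2 + 1 < lam x.1 → u - 1 < T x.1 (x.2 + 1)) ∧
      (x.2 < lam (x.1 + 1) → T (x.1 + 1) x.2 ≠ u) ∧ x ≠ (a0, j0 - 1)
  · obtain ⟨⟨px, cx⟩, hx1, hx2, hx3, hx4, hx5⟩ := hX
    simp only at hx1 hx2 hx3 hx4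
    apply swap_lemma hlp hT px cx a0 j0 (u - 1) hx1 hj0in hx2 (by omega)
    · exact hx3
    · intro h; rw [hu1]; exact hx4 h
    · intro h0
      have h1 : T a0 (j0 - 1) ≤ T a0 j0 := hT.2.2.1 a0 (j0 - 1) j0 (by omega) hj0in
      have h2 := hleft h0
      omega
    · intro h0; exact hy0above h0
    · rintro ⟨rfl, hadj⟩
      apply hx5
      have : cx = j0 - 1 := by omega
      rw [this]
  · by_cases hXe : ∃ x : ℕ × ℕ, x.2 < lam x.1 ∧ T x.1 x.2 = u - 1 ∧
        (x.2 + 1 < lam x.1 → u - 1 < T x.1 (x.2 + 1)) ∧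
        (x.2 < lam (x.1 + 1) → T (x.1 + 1) x.2 ≠ u)
    · -- the x must be (a0, j0-1): gap contradiction
      exfalso
      obtain ⟨x, hx1, hx2, hx3, hx4⟩ := hXe
      have hxeq : x = (a0, j0 - 1) := by
        by_contra hne
        exact hX ⟨x, hx1, hx2, hx3, hx4, hne⟩
      subst hxeq
      simp only at hx1 hx2 hx3 hx4
      have hj0pos : 0 < j0 := by
        rcases Nat.eq_zero_or_pos j0 with h0 | h0
        · rw [h0] at hyval hx2
          simp at hx2
          omega
        · exact h0
      by_cases hbelow : j0 - 1 < lam (a0 + 1)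
      · have h5 : u - 1 < T (a0 + 1) (j0 - 1) := by
          have := hT.2.2.2 a0 (a0 + 1) (j0 - 1) (Nat.lt_succ_self a0) hbelow
          omega
        have h6 : T (a0 + 1) (j0 - 1) ≠ u := hx4 hbelow
        have hnotbad : (a0 + 1, j0 - 1) ∉ Bad := by
          intro hmem
          have h20 : T (a0 + 1) (j0 - 1) ≤ u := hzmax _ hmem
          omega
        apply hnotbad
        refine ⟨hbelow, by show 2 ≤ T (a0 + 1) (j0 - 1); omega, Or.inr ?_⟩
        show T (a0 + 1 - 1) (j0 - 1) ≠ T (a0 + 1) (j0 - 1) - 1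
        simp only [Nat.add_sub_cancel]
        intro heq
        omega
      · have := hgap a0
        omega
    · -- no removable (u-1)-cell at all: counting contradiction
      exfalso
      have H1 : ∀ q d, d < lam q → T q d = u - 1 → d < lam (q + 1) ∧ T (q + 1) d = u := by
        intro q d hd hv
        set c1 := Nat.findGreatest (fun e => e < lam q ∧ T q e = u - 1) (lam q) with hc1def
        have hc1P : c1 < lam q ∧ T q c1 = u - 1 :=
          Nat.findGreatest_spec (P := fun e => e < lam q ∧ T q e = u - 1) (n := lam q)
            (m := d) (by omega) ⟨hd, hv⟩
        have hc1ge : d ≤ c1 :=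
          Nat.le_findGreatest (P := fun e => e < lam q ∧ T q e = u - 1) (by omega) ⟨hd, hv⟩
        have hc1last : c1 + 1 < lam q → T q (c1 + 1) ≠ u - 1 := by
          intro h7 h8
          exact Nat.findGreatest_is_greatest (Nat.lt_succ_self c1) (by omega) ⟨h7, h8⟩
        have hx3' : c1 + 1 < lam q → u - 1 < T q (c1 + 1) := by
          intro h7
          have h8 := hT.2.2.1 q c1 (c1 + 1) (by omega) h7
          have h9 := hc1last h7
          omega
        have h9 : c1 < lam (q + 1) ∧ T (q + 1) c1 = u := by
          by_contra hc
          apply hXe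
          refine ⟨(q, c1), hc1P.1, hc1P.2, hx3', ?_⟩
          intro h10 heq
          exact hc ⟨h10, heq⟩
        have hd2 : d < lam (q + 1) := by omega
        have h12 : T q d < T (q + 1) d := hT.2.2.2 q (q + 1) d (Nat.lt_succ_self q) hd2
        have h13 : T (q + 1) d ≤ T (q + 1) c1 := hT.2.2.1 (q + 1) d c1 hc1ge h9.1
        exact ⟨hd2, by omega⟩
      set A := ES lam T (u - 2) with hA
      set B := ES lam T (u - 1) with hB
      have hmemB : (a0, j0) ∈ B := by
        refine ⟨hj0in, ?_⟩
        show T a0 j0 = u - 1 + 1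
        omega
      have himg : (fun z : ℕ × ℕ => (z.1 + 1, z.2)) '' A ⊆ B \ {(a0, j0)} := by
        rintro ⟨q2, d2⟩ ⟨⟨q, d⟩, ⟨hd, hv⟩, heq⟩
        have hd' : d < lam q := hd
        have hv2 : T q d = u - 2 + 1 := hv
        have hv' : T q d = u - 1 := by omega
        obtain ⟨hbel1, hbel2⟩ := H1 q d hd' hv'
        rw [← heq]
        constructor
        · refine ⟨hbel1, ?_⟩
          show T (q + 1) d = u - 1 + 1
          omega
        · simp only [Set.mem_singleton_iff, Prod.mk.injEq, not_and]
          intro hq hd'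
          apply hy0above (by omega)
          have : a0 - 1 = q := by omega
          rw [this, ← hd']
          omega
      have hinj : Function.Injective (fun z : ℕ × ℕ => (z.1 + 1, z.2)) := by
        rintro ⟨q1, d1⟩ ⟨q2, d2⟩ h
        simp only [Prod.mk.injEq] at h
        simp only [Prod.mk.injEq]
        omega
      have hAcard : A.ncard = ((fun z : ℕ × ℕ => (z.1 + 1, z.2)) '' A).ncard :=
        (Set.ncard_image_of_injective _ hinj).symm
      have h14 : ((fun z : ℕ × ℕ => (z.1 + 1, z.2)) '' A).ncard ≤ (B \ {(a0, j0)}).ncard :=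
        Set.ncard_le_ncard himg ((ES_finite hlp T _).diff)
      have h15 : (B \ {(a0, j0)}).ncard + 1 = B.ncard :=
        Set.ncard_diff_singleton_add_one hmemB (ES_finite hlp T _)
      have h16 : B.ncard ≤ A.ncard := by
        have := hmono (u - 2)
        rw [entryCount_eq, entryCount_eq] at this
        have hidx : u - 2 + 1 = u - 1 := by omega
        rw [hidx] at this
        exact this
      omega

/-- The superstandard tableau. -/
def SStd (lam : ℕ → ℕ) : ℕ → ℕ → ℕ := fun i j => if j < lam i then i + 1 else 0

lemma SStd_isSSYT {lam : ℕ → ℕ} (hlp : IsPartition lam) : IsSSYT lam (SStd lam) := by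
  refine ⟨?_, ?_, ?_, ?_⟩
  · intro i j hj; simp [SStd, hj]
  · intro i j hj; simp [SStd, Nat.not_lt.mpr hj]
  · intro i j k hjk hk
    have hj : j < lam i := by omega
    simp [SStd, hj, hk]
  · intro i i' j hii' hj
    have hj2 : j < lam i := lt_of_lt_of_le hj (hlp.1 (le_of_lt hii'))
    simp [SStd, hj, hj2]
    omega

lemma ES_SStd {lam : ℕ → ℕ} (m : ℕ) :
    ES lam (SStd lam) m = (Prod.mk m : ℕ → ℕ × ℕ) '' Set.Iio (lam m) := by
  ext ⟨a, b⟩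
  simp only [ES, Set.mem_setOf_eq, SStd, Set.mem_image, Set.mem_Iio]
  constructor
  · rintro ⟨hb, hv⟩
    rw [if_pos hb] at hv
    have : a = m := by omega
    subst this
    exact ⟨b, hb, rfl⟩
  · rintro ⟨x, hx, heq⟩
    injection heq with h1 h2
    subst h1; subst h2
    exact ⟨hx, by rw [if_pos hx]⟩

lemma SStd_weight {lam : ℕ → ℕ} : HasWeight lam (SStd lam) lam := by
  intro m
  rw [entryCount_eq, ES_SStd, ncard_row]

/-- Any SSYT with weight `lam` is superstandard. -/
lemma weight_lam_unique {lam : ℕ → ℕ} {T : ℕ → ℕ → ℕ} (hlp : IsPartition lam)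
    (hT : IsSSYT lam T) (hw : HasWeight lam T lam) :
    T = SStd lam := by
  have main : ∀ k, ∀ j, j < lam k → T k j = k + 1 := by
    intro k
    induction k using Nat.strong_induction_on with
    | _ k ih =>
      apply row_full hlp hT (hw k)
      intro p hp c hc
      rw [ih p hp c hc]
      omega
  funext i j
  by_cases hj : j < lam i
  · rw [main i j hj, SStd, if_pos hj]
  · rw [hT.2.1 i j (by omega), SStd, if_neg hj]

lemma kostka_self {lam : ℕ → ℕ} (hlp : IsPartition lam) : kostka lam lam = 1 := by
  have : {T : ℕ → ℕ → ℕ | IsSSYT lam T ∧ HasWeight lam T lam} = {SStd lam} := by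
    ext T
    simp only [Set.mem_setOf_eq, Set.mem_singleton_iff]
    constructor
    · rintro ⟨h1, h2⟩
      exact weight_lam_unique hlp h1 h2
    · rintro rfl
      exact ⟨SStd_isSSYT hlp, SStd_weight⟩
  rw [kostka, this, Set.ncard_singleton]

/-- Backward direction main step: K = 1 implies mu = lam, under the gap condition. -/
lemma k_one_implies_eq {lam mu : ℕ → ℕ} (hlp : IsPartition lam)
    (hgap : ∀ i, lam i - lam (i + 1) ≤ 1) (hmu : IsPartition mu)
    (hk : kostka lam mu = 1) : mu = lam := by
  obtain ⟨T0, hT0⟩ := Set.ncard_eq_one.mp hk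
  have hmem : T0 ∈ {T : ℕ → ℕ → ℕ | IsSSYT lam T ∧ HasWeight lam T mu} := by
    rw [hT0]; rfl
  obtain ⟨hssyt, hwt⟩ := hmem
  have hmono : ∀ m, entryCount lam T0 (m + 1) ≤ entryCount lam T0 m := by
    intro m
    rw [hwt m, hwt (m + 1)]
    exact hmu.1 (Nat.le_succ m)
  -- no bad cells
  have hnobad : ∀ a b, b < lam a → 2 ≤ T0 a b → (a = 0 ∨ T0 (a - 1) b ≠ T0 a b - 1) → False := by
    intro a b hab h2 hb
    obtain ⟨T', h1, h2', h3⟩ := exists_other hlp hgap hssyt hmono a b hab h2 hb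
    have : T' ∈ {T : ℕ → ℕ → ℕ | IsSSYT lam T ∧ HasWeight lam T mu} :=
      ⟨h1, fun m => by rw [h2' m]; exact hwt m⟩
    rw [hT0] at this
    exact h3 this
  -- superstandard
  have hstd : ∀ a b, b < lam a → T0 a b = a + 1 := by
    intro a
    induction a with
    | zero =>
      intro b hb
      have h1 := hssyt.1 0 b hb
      by_contra hne
      exact hnobad 0 b hb (by omega) (Or.inl rfl)
    | succ a iha =>
      intro b hb
      have hb' : b < lam a := lt_of_lt_of_le hb (hlp.1 (Nat.le_succ a))
      have h1 := row_lb hlp hssyt (a + 1) b hb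
      by_contra hne
      apply hnobad (a + 1) b hb (by omega)
      right
      simp only [Nat.add_sub_cancel]
      rw [iha b hb']
      omega
  -- conclude weights
  have hT0S : T0 = SStd lam := by
    funext i j
    by_cases hj : j < lam i
    · rw [hstd i j hj, SStd, if_pos hj]
    · rw [hssyt.2.1 i j (by omega), SStd, if_neg hj]
  funext m
  rw [← hwt m, hT0S]
  have := SStd_weight (lam := lam) m
  rw [this]

lemma ncard_Iio (n : ℕ) : (Set.Iio n).ncard = n := by
  rw [← Finset.coe_range, Set.ncard_coe_finset, Finset.card_range]

lemma ncard_Iic (n : ℕ) : (Set.Iic n).ncard = n + 1 := by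
  have : Set.Iic n = Set.Iio (n + 1) := by
    ext x; simp [Nat.lt_succ_iff]
  rw [this, ncard_Iio]

lemma downclosed_eq_Iio {A : Set ℕ} {c : ℕ} (hfin : A.Finite)
    (hdc : ∀ a ∈ A, ∀ b, b ≤ a → b ∈ A) (hc : A.ncard = c) : A = Set.Iio c := by
  ext x
  simp only [Set.mem_Iio]
  constructor
  · intro hx
    by_contra hge
    have hsub : Set.Iic x ⊆ A := fun b hb => hdc x hx b hb
    have h1 := Set.ncard_le_ncard hsub hfin
    rw [ncard_Iic, hc] at h1
    omega
  · intro hx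
    by_contra hnx
    have hsub : A ⊆ Set.Iio x := by
      intro a ha
      simp only [Set.mem_Iio]
      by_contra h
      exact hnx (hdc a ha x (by omega))
    have h1 := Set.ncard_le_ncard hsub (Set.finite_Iio x)
    rw [ncard_Iio, hc] at h1
    omega

section Forward
variable {lam : ℕ → ℕ} (i0 : ℕ)

/-- The weight obtained from `lam` by moving one box from row `i0` to row `i0+1`. -/
noncomputable def muF (lam : ℕ → ℕ) (i0 : ℕ) : ℕ → ℕ :=
  Function.update (Function.update lam i0 (lam i0 - 1)) (i0 + 1) (lam (i0 + 1) + 1)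

/-- The unique tableau of shape `lam` and weight `muF`. -/
def UF (lam : ℕ → ℕ) (i0 : ℕ) : ℕ → ℕ → ℕ := fun p q =>
  if q < lam p then (if p = i0 ∧ q = lam i0 - 1 then i0 + 2 else p + 1) else 0

variable (hlp : IsPartition lam) (hgi : lam (i0 + 1) + 2 ≤ lam i0)

lemma muF_at0 : muF lam i0 i0 = lam i0 - 1 := by
  unfold muF
  rw [Function.update_of_ne (by omega), Function.update_self]

lemma muF_at1 : muF lam i0 (i0 + 1) = lam (i0 + 1) + 1 := by
  unfold muF
  rw [Function.update_self]

lemma muF_other (k : ℕ) (h0 : k ≠ i0) (h1 : k ≠ i0 + 1) : muF lam i0 k = lam k := by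
  unfold muF
  rw [Function.update_of_ne h1, Function.update_of_ne h0]

include hlp hgi in
lemma muF_partition : IsPartition (muF lam i0) := by
  constructor
  · apply antitone_nat_of_succ_le
    intro k
    rcases Nat.lt_trichotomy k i0 with h | h | h
    · rcases Nat.lt_or_ge (k + 1) i0 with h2 | h2
      · rw [muF_other _ k (by omega) (by omega), muF_other _ (k+1) (by omega) (by omega)]
        exact hlp.1 (Nat.le_succ k)
      · have : k + 1 = i0 := by omega
        rw [muF_other _ k (by omega) (by omega), this, muF_at0]
        have := hlp.1 (show k ≤ i0 by omega)
        omega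
    · subst h
      rw [muF_at0, muF_at1]
      omega
    · rcases Nat.lt_or_ge (i0 + 1) k with h2 | h2
      · rw [muF_other _ k (by omega) (by omega), muF_other _ (k+1) (by omega) (by omega)]
        exact hlp.1 (Nat.le_succ k)
      · have : k = i0 + 1 := by omega
        subst this
        rw [muF_at1, muF_other _ (i0+2) (by omega) (by omega)]
        have := hlp.1 (show i0 + 1 ≤ i0 + 2 by omega)
        omega
  · obtain ⟨N, hN⟩ := hlp.2
    refine ⟨max N (i0 + 2), fun k hk => ?_⟩
    rw [muF_other _ k (by omega) (by omega)]
    exact hN k (by omega)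

include hlp hgi in
lemma muF_psize : psize (muF lam i0) = psize lam := by
  obtain ⟨N0, hN0⟩ := hlp.2
  set N := max N0 (i0 + 2) with hN
  have hlam0 : ∀ k, N ≤ k → lam k = 0 := fun k hk => hN0 k (by omega)
  have hmu0 : ∀ k, N ≤ k → muF lam i0 k = 0 := by
    intro k hk
    rw [muF_other _ k (by omega) (by omega)]
    exact hlam0 k hk
  have h1 : psize (muF lam i0) = ∑ k ∈ Finset.range N, muF lam i0 k := by
    apply finsum_eq_sum_of_support_subset
    intro x hx
    simp only [Function.mem_support] at hx
    simp only [Finset.coe_range, Set.mem_Iio]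
    by_contra hc
    exact hx (hmu0 x (by omega))
  have h2 : psize lam = ∑ k ∈ Finset.range N, lam k := by
    apply finsum_eq_sum_of_support_subset
    intro x hx
    simp only [Function.mem_support] at hx
    simp only [Finset.coe_range, Set.mem_Iio]
    by_contra hc
    exact hx (hlam0 x (by omega))
  rw [h1, h2]
  have hm1 : i0 + 1 ∈ Finset.range N := by simp; omega
  have hm0 : i0 ∈ Finset.range N \ {i0 + 1} := by simp; omega
  rw [show muF lam i0 = Function.update (Function.update lam i0 (lam i0 - 1)) (i0 + 1)
    (lam (i0 + 1) + 1) from rfl]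
  rw [Finset.sum_update_of_mem hm1, Finset.sum_update_of_mem hm0]
  rw [Finset.sum_eq_sum_sdiff_singleton_add hm1 lam,
    Finset.sum_eq_sum_sdiff_singleton_add hm0 lam]
  have hg1 : 1 ≤ lam i0 := by omega
  omega

include hgi in
lemma muF_ne : muF lam i0 ≠ lam := by
  intro h
  have := congrFun h i0
  rw [muF_at0] at this
  omega

include hlp hgi in
lemma UF_isSSYT : IsSSYT lam (UF lam i0) := by
  have hg2 : 2 ≤ lam i0 := by omega
  refine ⟨?_, ?_, ?_, ?_⟩
  · intro i j hj
    unfold UF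
    rw [if_pos hj]
    split_ifs <;> omega
  · intro i j hj
    unfold UF
    rw [if_neg (by omega)]
  · intro i j k hjk hk
    have hj : j < lam i := by omega
    unfold UF
    rw [if_pos hj, if_pos hk]
    by_cases h1 : i = i0 ∧ j = lam i0 - 1
    · -- j is the special (last) cell; then k = j as well
      obtain ⟨rfl, rfl⟩ := h1
      have hkj : k = lam i - 1 := by omega
      rw [if_pos ⟨rfl, rfl⟩, if_pos ⟨rfl, hkj⟩]
    · by_cases h2 : i = i0 ∧ k = lam i0 - 1
      · rw [if_neg h1, if_pos h2]
        omega
      · rw [if_neg h1, if_neg h2]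
  · intro i i' j hii' hj
    have hj2 : j < lam i := lt_of_lt_of_le hj (hlp.1 (le_of_lt hii'))
    unfold UF
    rw [if_pos hj, if_pos hj2]
    by_cases h1 : i = i0 ∧ j = lam i0 - 1
    · -- vacuous: the cell below the special cell does not exist
      exfalso
      obtain ⟨rfl, rfl⟩ := h1
      have hle : lam i' ≤ lam (i + 1) := hlp.1 (by omega)
      omega
    · by_cases h2 : i' = i0 ∧ j = lam i0 - 1
      · rw [if_neg h1, if_pos h2]
        obtain ⟨rfl, _⟩ := h2
        omega
      · rw [if_neg h1, if_neg h2]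
        omega

include hlp hgi in
lemma UF_weight : HasWeight lam (UF lam i0) (muF lam i0) := by
  have hg2 : 2 ≤ lam i0 := by omega
  intro m
  rcases Nat.lt_trichotomy m i0 with hm | hm | hm
  · -- m ≠ i0, m ≠ i0+1
    rw [entryCount_eq, muF_other _ m (by omega) (by omega)]
    have : ES lam (UF lam i0) m = (Prod.mk m : ℕ → ℕ × ℕ) '' Set.Iio (lam m) := by
      ext ⟨a, b⟩
      simp only [ES, Set.mem_setOf_eq, Set.mem_image, Set.mem_Iio]
      constructor
      · rintro ⟨hb, hv⟩
        unfold UF at hv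
        rw [if_pos hb] at hv
        by_cases h1 : a = i0 ∧ b = lam i0 - 1
        · rw [if_pos h1] at hv; omega
        · rw [if_neg h1] at hv
          have : a = m := by omega
          subst this
          exact ⟨b, hb, rfl⟩
      · rintro ⟨x, hx, heq⟩
        injection heq with e1 e2
        subst e1; subst e2
        refine ⟨hx, ?_⟩
        unfold UF
        rw [if_pos hx, if_neg (by omega)]
    rw [this, ncard_row]
  · subst hm
    rw [entryCount_eq, muF_at0]
    have : ES lam (UF lam m) m = (Prod.mk m : ℕ → ℕ × ℕ) '' Set.Iio (lam m - 1) := by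
      ext ⟨a, b⟩
      simp only [ES, Set.mem_setOf_eq, Set.mem_image, Set.mem_Iio]
      constructor
      · rintro ⟨hb, hv⟩
        unfold UF at hv
        rw [if_pos hb] at hv
        by_cases h1 : a = m ∧ b = lam m - 1
        · rw [if_pos h1] at hv; omega
        · rw [if_neg h1] at hv
          have ham : a = m := by omega
          subst ham
          refine ⟨b, by omega, rfl⟩
      · rintro ⟨x, hx, heq⟩
        injection heq with e1 e2
        subst e1; subst e2
        refine ⟨by omega, ?_⟩
        unfold UF
        rw [if_pos (by omega), if_neg (by omega)]
    rw [this, ncard_row]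
  · rcases Nat.lt_or_ge (i0 + 1) m with hm2 | hm2
    · -- m > i0+1
      rw [entryCount_eq, muF_other _ m (by omega) (by omega)]
      have : ES lam (UF lam i0) m = (Prod.mk m : ℕ → ℕ × ℕ) '' Set.Iio (lam m) := by
        ext ⟨a, b⟩
        simp only [ES, Set.mem_setOf_eq, Set.mem_image, Set.mem_Iio]
        constructor
        · rintro ⟨hb, hv⟩
          unfold UF at hv
          rw [if_pos hb] at hv
          by_cases h1 : a = i0 ∧ b = lam i0 - 1
          · rw [if_pos h1] at hv; omega
          · rw [if_neg h1] at hv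
            have : a = m := by omega
            subst this
            exact ⟨b, hb, rfl⟩
        · rintro ⟨x, hx, heq⟩
          injection heq with e1 e2
          subst e1; subst e2
          refine ⟨hx, ?_⟩
          unfold UF
          rw [if_pos hx, if_neg (by omega)]
      rw [this, ncard_row]
    · -- m = i0+1
      have hm1 : m = i0 + 1 := by omega
      subst hm1
      rw [entryCount_eq, muF_at1]
      have hset : ES lam (UF lam i0) (i0 + 1) =
          insert (i0, lam i0 - 1) ((Prod.mk (i0 + 1) : ℕ → ℕ × ℕ) '' Set.Iio (lam (i0 + 1))) := by
        ext ⟨a, b⟩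
        simp only [ES, Set.mem_setOf_eq, Set.mem_insert_iff, Set.mem_image, Set.mem_Iio,
          Prod.mk.injEq]
        constructor
        · rintro ⟨hb, hv⟩
          unfold UF at hv
          rw [if_pos hb] at hv
          by_cases h1 : a = i0 ∧ b = lam i0 - 1
          · left; exact h1
          · rw [if_neg h1] at hv
            right
            have : a = i0 + 1 := by omega
            subst this
            exact ⟨b, hb, rfl, rfl⟩
        · rintro (⟨rfl, rfl⟩ | ⟨x, hx, rfl, rfl⟩)
          · refine ⟨by omega, ?_⟩
            unfold UF
            rw [if_pos (by omega), if_pos ⟨rfl, rfl⟩]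
          · refine ⟨hx, ?_⟩
            unfold UF
            rw [if_pos hx, if_neg (by omega)]
      rw [hset]
      have hnotmem : (i0, lam i0 - 1) ∉ (Prod.mk (i0 + 1) : ℕ → ℕ × ℕ) '' Set.Iio (lam (i0 + 1)) := by
        rintro ⟨x, hx, heq⟩
        injection heq with e1 e2
        omega
      rw [Set.ncard_insert_of_notMem hnotmem (row_finite _ _), ncard_row]

include hlp hgi in
lemma UF_unique {T : ℕ → ℕ → ℕ} (hT : IsSSYT lam T) (hw : HasWeight lam T (muF lam i0)) :
    T = UF lam i0 := by
  have hg2 : 2 ≤ lam i0 := by omega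
  -- Step 1: rows below i0 are superstandard
  have S1 : ∀ k, k < i0 → ∀ j, j < lam k → T k j = k + 1 := by
    intro k
    induction k using Nat.strong_induction_on with
    | _ k ih =>
      intro hk
      have hcount : entryCount lam T k = lam k := by
        rw [hw k, muF_other _ k (by omega) (by omega)]
      apply row_full hlp hT hcount
      intro p hp c hc
      rw [ih p hp (by omega) c hc]
      omega
  -- Step 2: row i0 is a prefix of (i0+1)'s, with a bigger last entry
  set A : Set ℕ := {c | c < lam i0 ∧ T i0 c = i0 + 1} with hA
  have hES0 : ES lam T i0 = (Prod.mk i0 : ℕ → ℕ × ℕ) '' A := by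
    ext ⟨a, b⟩
    simp only [ES, Set.mem_setOf_eq, Set.mem_image, hA]
    constructor
    · rintro ⟨hb, hv⟩
      have h1 := row_lb hlp hT a b hb
      have ha : a ≤ i0 := by omega
      rcases Nat.lt_or_ge a i0 with h2 | h2
      · rw [S1 a h2 b hb] at hv; omega
      · have : a = i0 := by omega
        subst this
        exact ⟨b, ⟨hb, hv⟩, rfl⟩
    · rintro ⟨x, ⟨hx1, hx2⟩, heq⟩
      injection heq with e1 e2
      subst e1; subst e2
      exact ⟨hx1, hx2⟩
  have hAfin : A.Finite := (Set.finite_Iio (lam i0)).subset (fun c hc => hc.1)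
  have hcard0 : A.ncard = lam i0 - 1 := by
    have := hw i0
    rw [entryCount_eq, hES0, Set.ncard_image_of_injective _ (mk_injective i0), muF_at0] at this
    exact this
  have hdc : ∀ a ∈ A, ∀ b, b ≤ a → b ∈ A := by
    intro a ha b hb
    have hb2 : b < lam i0 := by have := ha.1; omega
    have h1 : T i0 b ≤ T i0 a := hT.2.2.1 i0 b a hb ha.1
    have h2 := row_lb hlp hT i0 b hb2
    have := ha.2
    exact ⟨hb2, by omega⟩
  have hAIio : A = Set.Iio (lam i0 - 1) := downclosed_eq_Iio hAfin hdc hcard0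
  have hpre : ∀ j, j < lam i0 - 1 → T i0 j = i0 + 1 := by
    intro j hj
    have : j ∈ A := by rw [hAIio]; exact hj
    exact this.2
  have hlast : i0 + 2 ≤ T i0 (lam i0 - 1) := by
    have h1 := row_lb hlp hT i0 (lam i0 - 1) (by omega)
    have h2 : T i0 (lam i0 - 1) ≠ i0 + 1 := by
      intro heq
      have : (lam i0 - 1) ∈ A := ⟨by omega, heq⟩
      rw [hAIio] at this
      simp only [Set.mem_Iio] at this
      omega
    omega
  -- Step 3: determine the last cell of row i0 and all of row i0+1
  have hsub1 : ES lam T (i0 + 1) ⊆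
      insert (i0, lam i0 - 1) ((Prod.mk (i0 + 1) : ℕ → ℕ × ℕ) '' Set.Iio (lam (i0 + 1))) := by
    rintro ⟨a, b⟩ ⟨hb, hv⟩
    have hb' : b < lam a := hb
    have hv' : T a b = i0 + 2 := hv
    have h1 := row_lb hlp hT a b hb'
    have ha : a ≤ i0 + 1 := by omega
    simp only [Set.mem_insert_iff, Set.mem_image, Set.mem_Iio, Prod.mk.injEq]
    rcases Nat.lt_or_ge a i0 with h2 | h2
    · rw [S1 a h2 b hb'] at hv'; omega
    · rcases Nat.eq_or_lt_of_le h2 with h3 | h3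
      · subst h3
        left
        refine ⟨rfl, ?_⟩
        by_contra hne
        have hblt : b < lam i0 - 1 := by omega
        rw [hpre b hblt] at hv'
        omega
      · have : a = i0 + 1 := by omega
        subst this
        right
        exact ⟨b, hb', rfl, rfl⟩
  have hnotmem : (i0, lam i0 - 1) ∉ (Prod.mk (i0 + 1) : ℕ → ℕ × ℕ) '' Set.Iio (lam (i0 + 1)) := by
    rintro ⟨x, hx, heq⟩
    injection heq with e1 e2
    omega
  have hfin1 : (insert (i0, lam i0 - 1)
      ((Prod.mk (i0 + 1) : ℕ → ℕ × ℕ) '' Set.Iio (lam (i0 + 1)))).Finite :=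
    (row_finite _ _).insert _
  have hcard1 : (insert (i0, lam i0 - 1)
      ((Prod.mk (i0 + 1) : ℕ → ℕ × ℕ) '' Set.Iio (lam (i0 + 1)))).ncard = lam (i0 + 1) + 1 := by
    rw [Set.ncard_insert_of_notMem hnotmem (row_finite _ _), ncard_row]
  have heq1 : ES lam T (i0 + 1) = insert (i0, lam i0 - 1)
      ((Prod.mk (i0 + 1) : ℕ → ℕ × ℕ) '' Set.Iio (lam (i0 + 1))) := by
    apply Set.eq_of_subset_of_ncard_le hsub1 _ hfin1
    rw [hcard1, ← entryCount_eq, hw (i0 + 1), muF_at1]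
  have hlast2 : T i0 (lam i0 - 1) = i0 + 2 := by
    have : (i0, lam i0 - 1) ∈ ES lam T (i0 + 1) := by
      rw [heq1]
      exact Set.mem_insert _ _
    exact this.2
  have hrow1 : ∀ j, j < lam (i0 + 1) → T (i0 + 1) j = i0 + 2 := by
    intro j hj
    have : (i0 + 1, j) ∈ ES lam T (i0 + 1) := by
      rw [heq1]
      exact Set.mem_insert_of_mem _ ⟨j, hj, rfl⟩
    exact this.2
  -- Step 4: rows above i0+1
  have S4 : ∀ k, i0 + 2 ≤ k → ∀ j, j < lam k → T k j = k + 1 := by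
    intro k
    induction k using Nat.strong_induction_on with
    | _ k ih =>
      intro hk
      have hcount : entryCount lam T k = lam k := by
        rw [hw k, muF_other _ k (by omega) (by omega)]
      apply row_full hlp hT hcount
      intro p hp c hc
      rcases Nat.lt_or_ge p i0 with h2 | h2
      · rw [S1 p h2 c hc]; omega
      · rcases Nat.eq_or_lt_of_le h2 with h3 | h3
        · subst h3
          rcases Nat.lt_or_ge c (lam i0 - 1) with h4 | h4
          · rw [hpre c h4]; omega
          · have hceq : c = lam i0 - 1 := by omega
            rw [hceq, hlast2]; omega
        · rcases Nat.eq_or_lt_of_le (show i0 + 1 ≤ p by omega) with h4 | h4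
          · rw [← h4] at hc
            rw [← h4, hrow1 c hc]
            omega
          · rw [ih p hp (by omega) c hc]; omega
  -- conclude
  funext p q
  by_cases hq : q < lam p
  · unfold UF
    rw [if_pos hq]
    by_cases h1 : p = i0 ∧ q = lam i0 - 1
    · obtain ⟨rfl, rfl⟩ := h1
      rw [if_pos ⟨rfl, rfl⟩, hlast2]
    · rw [if_neg h1]
      rcases Nat.lt_trichotomy p i0 with h2 | h2 | h2
      · exact S1 p h2 q hq
      · subst h2
        have : q < lam p - 1 := by
          rcases Nat.lt_or_ge q (lam p - 1) with h | h
          · exact h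
          · exfalso; exact h1 ⟨rfl, by omega⟩
        exact hpre q this
      · rcases Nat.eq_or_lt_of_le (show i0 + 1 ≤ p by omega) with h3 | h3
        · rw [← h3] at hq ⊢
          rw [hrow1 q hq]
        · exact S4 p (by omega) q hq
  · unfold UF
    rw [hT.2.1 p q (by omega), if_neg hq]

include hlp hgi in
lemma kostka_muF : kostka lam (muF lam i0) = 1 := by
  have : {T : ℕ → ℕ → ℕ | IsSSYT lam T ∧ HasWeight lam T (muF lam i0)} = {UF lam i0} := by
    ext T
    simp only [Set.mem_setOf_eq, Set.mem_singleton_iff]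
    constructor
    · rintro ⟨h1, h2⟩
      exact UF_unique i0 hlp hgi h1 h2
    · rintro rfl
      exact ⟨UF_isSSYT i0 hlp hgi, UF_weight i0 hlp hgi⟩
  rw [kostka, this, Set.ncard_singleton]

end Forward

end KostkaAux

theorem stmt9 (n : ℕ) (lam : ℕ → ℕ)
    (hlp : IsPartition lam) (hln : psize lam = n) :
    (∀ mu : ℕ → ℕ, IsPartition mu → psize mu = n →
        (kostka lam mu = 1 ↔ mu = lam)) ↔
      (∀ i, lam i - lam (i + 1) ≤ 1) := by
  constructor
  · intro H i
    by_contra hgi0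
    have hgi : lam (i + 1) + 2 ≤ lam i := by omega
    have hk := KostkaAux.kostka_muF i hlp hgi
    have hmu := KostkaAux.muF_partition i hlp hgi
    have hsz : psize (KostkaAux.muF lam i) = n := by
      rw [KostkaAux.muF_psize i hlp hgi, hln]
    have heq := (H _ hmu hsz).mp hk
    exact KostkaAux.muF_ne i hgi heq
  · intro hgap mu hmu _
    constructor
    · intro hk
      exact KostkaAux.k_one_implies_eq hlp hgap hmu hk
    · rintro rfl
      exact KostkaAux.kostka_self hlp
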